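/- Let L be a lattice (free ℤ-module of finite rank r+1) equipped with a nondegenerate symmetric bilinear form of signature (1, r), and let σ be an isometry of L. Suppose there is a nonzero vector v ∈ L ⊗ ℝ with σ(v) = λ v for a real number λ > 1. Then the eigenvalues of σ ⊗ ℂ are exactly λ, λ⁻¹, and r−1 further eigenvalues all of modulus 1; in particular λ is an algebraic integer all of whose conjugates other than λ and λ⁻¹ have modulus 1 (λ is a Salem number if moreover v can be chosen with ⟨v,v⟩ = 0). -/

import Mathlib

open Matrix Polynomial

lemma my_charpoly_eval {n : Type*} [Fintype n] [DecidableEq n] {R : Type*} [CommRing R]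
    (B : Matrix n n R) (t : R) :
    B.charpoly.eval t = (Matrix.diagonal (fun _ => t) - B).det := by
  rw [Matrix.charpoly, ← Polynomial.coe_evalRingHom, RingHom.map_det]
  congr 1
  ext i j
  by_cases h : i = j <;>
    simp [Matrix.charmatrix_apply, Matrix.diagonal_apply, h]

lemma my_isRoot_of_eig {K : Type*} [Field K] {n : Type*} [Fintype n] [DecidableEq n]
    (B : Matrix n n K) (t : K) (w : n → K) (hw : w ≠ 0) (h : B.mulVec w = t • w) :
    B.charpoly.IsRoot t := by
  rw [Polynomial.IsRoot, my_charpoly_eval, ← Matrix.exists_mulVec_eq_zero_iff]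
  refine ⟨w, hw, ?_⟩
  funext i
  simp [Matrix.sub_mulVec, h, Matrix.mulVec_diagonal, Pi.smul_apply, smul_eq_mul]

lemma my_eig_of_isRoot {K : Type*} [Field K] {n : Type*} [Fintype n] [DecidableEq n]
    (B : Matrix n n K) (t : K) (h : B.charpoly.IsRoot t) :
    ∃ w ≠ 0, B.mulVec w = t • w := by
  rw [Polynomial.IsRoot, my_charpoly_eval, ← Matrix.exists_mulVec_eq_zero_iff] at h
  obtain ⟨w, hw, hw2⟩ := h
  refine ⟨w, hw, ?_⟩
  funext i
  have := congr_fun hw2 i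
  simp [Matrix.sub_mulVec, Matrix.mulVec_diagonal] at this
  simpa [Pi.smul_apply, smul_eq_mul] using (sub_eq_zero.mp this).symm

lemma my_star_mulVec {n : Type*} [Fintype n] (B : Matrix n n ℝ) (y : n → ℂ) :
    star ((B.map (Complex.ofReal)) *ᵥ y) = (B.map (Complex.ofReal)) *ᵥ (star y) := by
  funext i
  simp [Matrix.mulVec, dotProduct, star_sum, Matrix.map_apply, Complex.conj_ofReal]

/-- an isometry of an integral lattice of signature (1,r) with a real
eigenvalue λ > 1 (with eigenvector in L ⊗ ℝ) has eigenvalues λ, λ⁻¹ and r−1 further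
eigenvalues of modulus 1; in particular λ is an algebraic integer all of whose conjugates
other than λ and λ⁻¹ have modulus 1. -/
theorem signature_one_r_isometry_eigenvalues
    {r : ℕ} (M S : Matrix (Fin (r + 1)) (Fin (r + 1)) ℤ)
    (hMsym : M.transpose = M)
    (hsig : ∃ P : Matrix (Fin (r + 1)) (Fin (r + 1)) ℝ, IsUnit P.det ∧
      P.transpose * (M.map (Int.cast : ℤ → ℝ)) * P =
        Matrix.diagonal (fun i => if i = 0 then (1 : ℝ) else -1))
    (hSisom : S.transpose * M * S = M) (hSunit : IsUnit S.det)
    (lam : ℝ) (hlam : 1 < lam)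
    (v : Fin (r + 1) → ℝ) (hv : v ≠ 0)
    (heig : (S.map (Int.cast : ℤ → ℝ)).mulVec v = lam • v) :
    (S.map (Int.cast : ℤ → ℂ)).charpoly.IsRoot (lam : ℂ) ∧
    (S.map (Int.cast : ℤ → ℂ)).charpoly.IsRoot ((lam⁻¹ : ℝ) : ℂ) ∧
    (∀ μ : ℂ, (S.map (Int.cast : ℤ → ℂ)).charpoly.IsRoot μ →
      μ ≠ (lam : ℂ) → μ ≠ ((lam⁻¹ : ℝ) : ℂ) → ‖μ‖ = 1) ∧
    IsIntegral ℤ lam ∧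
    (∀ μ : ℂ, ((minpoly ℚ lam).map (algebraMap ℚ ℂ)).IsRoot μ →
      μ ≠ (lam : ℂ) → μ ≠ ((lam⁻¹ : ℝ) : ℂ) → ‖μ‖ = 1) := by
  classical
  set Sr : Matrix (Fin (r+1)) (Fin (r+1)) ℝ := S.map (Int.cast : ℤ → ℝ) with hSr
  set Mr : Matrix (Fin (r+1)) (Fin (r+1)) ℝ := M.map (Int.cast : ℤ → ℝ) with hMr
  set A : Matrix (Fin (r+1)) (Fin (r+1)) ℂ := Sr.map Complex.ofReal with hAdef
  set Mc : Matrix (Fin (r+1)) (Fin (r+1)) ℂ := Mr.map Complex.ofReal with hMcdef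
  have hA : S.map (Int.cast : ℤ → ℂ) = A := by
    ext i j; simp [hAdef, hSr, Matrix.map_apply]
  rw [hA]
  -- complexified eigenvector
  set v' : Fin (r+1) → ℂ := fun i => (v i : ℂ) with hv'def
  have hv' : v' ≠ 0 := by
    intro h
    apply hv
    funext i
    have := congr_fun h i
    simpa [hv'def] using this
  have heigC : A *ᵥ v' = (lam : ℂ) • v' := by
    funext i
    have h1 := (Complex.ofRealHom : ℝ →+* ℂ).map_mulVec Sr v i
    have h2 : (Complex.ofRealHom : ℝ →+* ℂ) ∘ v = v' := by funext j; simp [hv'def]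
    rw [h2] at h1
    have : ((Sr *ᵥ v) i : ℂ) = (A *ᵥ v') i := h1
    rw [heig] at this
    simp only [Pi.smul_apply, smul_eq_mul] at this ⊢
    rw [← this]
    push_cast
    rfl
  -- symmetric complexified M, isometry over ℂ
  have hMcsym : Mcᵀ = Mc := by
    ext i j
    simp only [hMcdef, hMr, Matrix.transpose_apply, Matrix.map_apply]
    rw [show M j i = Mᵀ i j from rfl, hMsym]
  have hIsoC : Aᵀ * Mc * A = Mc := by
    have h0 : ((Int.castRingHom ℂ).mapMatrix (Sᵀ * M * S) : Matrix (Fin (r+1)) (Fin (r+1)) ℂ)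
        = (Int.castRingHom ℂ).mapMatrix M := by rw [hSisom]
    simp only [_root_.map_mul] at h0
    simp only [RingHom.mapMatrix_apply] at h0
    have ht : (Sᵀ).map (Int.cast : ℤ → ℂ) = Aᵀ := by
      ext i j; simp [hAdef, hSr, Matrix.map_apply]
    have hm : M.map (Int.cast : ℤ → ℂ) = Mc := by
      ext i j; simp [hMcdef, hMr, Matrix.map_apply]
    have hi : (Int.castRingHom ℂ : ℤ →+* ℂ) = (Int.cast : ℤ → ℂ) := rfl
    rw [show ((Sᵀ).map (Int.castRingHom ℂ : ℤ →+* ℂ)) = Aᵀ from ht,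
        show (M.map (Int.castRingHom ℂ : ℤ →+* ℂ)) = Mc from hm,
        show (S.map (Int.castRingHom ℂ : ℤ →+* ℂ)) = A from hA] at h0
    exact h0
  -- determinants
  have hMrdet : Mr.det ≠ 0 := by
    obtain ⟨P, hP, hPsig⟩ := hsig
    intro h
    have := congr_arg Matrix.det hPsig
    rw [Matrix.det_mul, Matrix.det_mul, Matrix.det_transpose, h] at this
    simp only [mul_zero, zero_mul] at this
    have hd : (Matrix.diagonal (fun i : Fin (r+1) => if i = 0 then (1:ℝ) else -1)).det ≠ 0 := by
      rw [Matrix.det_diagonal]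
      apply Finset.prod_ne_zero_iff.mpr
      intro i _
      by_cases hi : i = 0 <;> simp [hi]
    exact hd this.symm
  have hMcdet : Mc.det ≠ 0 := by
    have : Mc.det = (Mr.det : ℂ) := by
      rw [hMcdef, show Mr.map Complex.ofReal = Complex.ofRealHom.mapMatrix Mr from rfl]
      exact (RingHom.map_det Complex.ofRealHom Mr).symm
    rw [this]
    exact_mod_cast hMrdet
  have hlamC : (lam : ℂ) ≠ 0 := by
    simp only [ne_eq, Complex.ofReal_eq_zero]
    linarith
  -- Part 1
  have part1 : A.charpoly.IsRoot (lam : ℂ) := my_isRoot_of_eig A _ v' hv' heigC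
  -- Part 2
  have hu : Mc *ᵥ v' ≠ 0 := by
    intro h
    exact hMcdet (Matrix.exists_mulVec_eq_zero_iff.mp ⟨v', hv', h⟩)
  have heigT : Aᵀ *ᵥ (Mc *ᵥ v') = ((lam⁻¹ : ℝ) : ℂ) • (Mc *ᵥ v') := by
    have h1 : Mc *ᵥ v' = (Aᵀ * Mc * A) *ᵥ v' := by rw [hIsoC]
    have h2 : (Aᵀ * Mc * A) *ᵥ v' = (Aᵀ * Mc) *ᵥ (A *ᵥ v') := by
      rw [Matrix.mulVec_mulVec]
    rw [h2, heigC, Matrix.mulVec_smul, ← Matrix.mulVec_mulVec] at h1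
    have hcast : ((lam⁻¹ : ℝ) : ℂ) = ((lam : ℂ))⁻¹ := by push_cast; ring
    rw [hcast]
    calc Aᵀ *ᵥ (Mc *ᵥ v')
        = (lam:ℂ)⁻¹ • ((lam:ℂ) • (Aᵀ *ᵥ (Mc *ᵥ v'))) := by
          rw [smul_smul, inv_mul_cancel₀ hlamC, one_smul]
      _ = (lam:ℂ)⁻¹ • (Mc *ᵥ v') := by rw [← h1]
  have part2 : A.charpoly.IsRoot ((lam⁻¹ : ℝ) : ℂ) := by
    have htr : Aᵀ.charpoly.IsRoot ((lam⁻¹ : ℝ) : ℂ) :=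
      my_isRoot_of_eig Aᵀ _ (Mc *ᵥ v') hu heigT
    rw [Polynomial.IsRoot, my_charpoly_eval] at htr ⊢
    rw [← Matrix.det_transpose]
    rw [Matrix.transpose_sub, Matrix.diagonal_transpose]
    exact htr
  -- Part 3 : core
  have part3 : ∀ μ : ℂ, A.charpoly.IsRoot μ →
      μ ≠ (lam : ℂ) → μ ≠ ((lam⁻¹ : ℝ) : ℂ) → ‖μ‖ = 1 := by
    intro μ hroot hne1 hne2
    by_contra habs
    obtain ⟨w, hw, heigw⟩ := my_eig_of_isRoot A μ hroot
    obtain ⟨P, hPdet, hPsig⟩ := hsig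
    set Pc : Matrix (Fin (r+1)) (Fin (r+1)) ℂ := P.map Complex.ofReal with hPcdef
    set H : (Fin (r+1) → ℂ) → (Fin (r+1) → ℂ) → ℂ :=
      fun x y => x ⬝ᵥ (Mc *ᵥ (star y)) with hHdef
    have hstarA : ∀ y : Fin (r+1) → ℂ, star (A *ᵥ y) = A *ᵥ star y := by
      intro y; rw [hAdef]; exact my_star_mulVec Sr y
    have hstarP : ∀ y : Fin (r+1) → ℂ, star (Pc *ᵥ y) = Pc *ᵥ star y := by
      intro y; rw [hPcdef]; exact my_star_mulVec P y
    -- invariance of H under A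
    have hHinv : ∀ x y, H (A *ᵥ x) (A *ᵥ y) = H x y := by
      intro x y
      simp only [hHdef]
      rw [hstarA, Matrix.mulVec_mulVec, Matrix.dotProduct_mulVec,
        ← Matrix.mulVec_transpose, Matrix.mulVec_mulVec]
      have hmat : (Mc * A)ᵀ * A = Mc := by
        rw [Matrix.transpose_mul, hMcsym, Matrix.mul_assoc]
        rw [← Matrix.mul_assoc, hIsoC]
      rw [hmat, Matrix.dotProduct_mulVec, ← Matrix.mulVec_transpose, hMcsym]
    -- sesquilinear scaling
    have hHsmul : ∀ (c d : ℂ) (x y : Fin (r+1) → ℂ),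
        H (c • x) (d • y) = c * star d * H x y := by
      intro c d x y
      simp only [hHdef, star_smul, Matrix.mulVec_smul, smul_dotProduct,
        dotProduct_smul, smul_eq_mul]
      ring
    have hEig : ∀ (α β : ℂ) (x y : Fin (r+1) → ℂ), A *ᵥ x = α • x → A *ᵥ y = β • y →
        H x y = α * star β * H x y := by
      intro α β x y hx hy
      have h := hHinv x y
      rw [hx, hy, hHsmul] at h
      exact h.symm
    have cancel : ∀ (c t : ℂ), t = c * t → c ≠ 1 → t = 0 := by
      intro c t h hc
      have h2 : (1 - c) * t = 0 := by linear_combination h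
      rcases mul_eq_zero.mp h2 with h3 | h3
      · exact absurd (sub_eq_zero.mp h3).symm hc
      · exact h3
    -- the four vanishing statements
    have hlamstar : star ((lam : ℂ)) = (lam : ℂ) := by
      simp [Complex.conj_ofReal]
    have hvv : H v' v' = 0 := by
      refine cancel _ _ (by simpa [hlamstar] using hEig (lam:ℂ) (lam:ℂ) v' v' heigC heigC) ?_
      intro h
      have h2 : lam * lam = 1 := by exact_mod_cast h
      nlinarith
    have hww : H w w = 0 := by
      refine cancel _ _ (hEig μ μ w w heigw heigw) ?_
      intro h
      apply habs
      have h2 : Complex.normSq μ = 1 := by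
        have : μ * star μ = ((Complex.normSq μ : ℝ) : ℂ) := by
          simp [Complex.star_def, Complex.mul_conj]
        rw [this] at h
        exact_mod_cast h
      rw [Complex.norm_def, h2, Real.sqrt_one]
    have hlaminv : ((lam⁻¹ : ℝ) : ℂ) = ((lam : ℂ))⁻¹ := by push_cast; ring
    have hvw : H v' w = 0 := by
      refine cancel _ _ (hEig (lam:ℂ) μ v' w heigC heigw) ?_
      intro h
      apply hne2
      have h2 : star μ = ((lam:ℂ))⁻¹ := eq_inv_of_mul_eq_one_right h
      have h3 : μ = star (((lam:ℂ))⁻¹) := by rw [← h2, star_star]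
      rw [h3, hlaminv]
      simp [Complex.star_def, ← Complex.ofReal_inv, Complex.conj_ofReal]
    have hwv : H w v' = 0 := by
      refine cancel _ _ (by simpa [hlamstar] using hEig μ (lam:ℂ) w v' heigw heigC) ?_
      intro h
      apply hne2
      rw [hlaminv]
      exact eq_inv_of_mul_eq_one_left h
    -- signature over ℂ
    have hPcunit : IsUnit Pc.det := by
      have hPdet' : P.det ≠ 0 := by
        intro h
        rw [h] at hPdet
        exact (not_isUnit_zero : ¬ IsUnit (0:ℝ)) hPdet
      have : Pc.det = ((P.det : ℝ) : ℂ) := by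
        rw [hPcdef, show P.map Complex.ofReal = Complex.ofRealHom.mapMatrix P from rfl]
        exact (RingHom.map_det Complex.ofRealHom P).symm
      rw [isUnit_iff_ne_zero, this]
      exact_mod_cast hPdet'
    set dC : Fin (r+1) → ℂ := fun i => if i = 0 then (1:ℂ) else -1 with hdCdef
    have hsigC : Pcᵀ * Mc * Pc = Matrix.diagonal dC := by
      have h0 : (Complex.ofRealHom.mapMatrix (Pᵀ * Mr * P) : Matrix (Fin (r+1)) (Fin (r+1)) ℂ)
          = Complex.ofRealHom.mapMatrix (Matrix.diagonal fun i => if i = 0 then (1:ℝ) else -1) := by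
        rw [hPsig]
      simp only [_root_.map_mul] at h0
      simp only [RingHom.mapMatrix_apply] at h0
      have h1 : (Pᵀ).map (Complex.ofReal) = Pcᵀ := by
        ext i j; simp [hPcdef, Matrix.map_apply]
      have h2 : (Matrix.diagonal fun i : Fin (r+1) => if i = 0 then (1:ℝ) else -1).map
          (Complex.ofReal) = Matrix.diagonal dC := by
        ext i j
        rcases eq_or_ne i j with h | h
        · subst h
          simp [Matrix.map_apply, Matrix.diagonal_apply_eq, hdCdef, apply_ite Complex.ofReal]
        · simp [Matrix.map_apply, Matrix.diagonal_apply_ne _ h]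
      rw [show (Pᵀ).map ⇑Complex.ofRealHom = Pcᵀ from h1,
        show Mr.map ⇑Complex.ofRealHom = Mc from rfl,
        show P.map ⇑Complex.ofRealHom = Pc from rfl,
        show (Matrix.diagonal fun i : Fin (r+1) => if i = 0 then (1:ℝ) else -1).map
          ⇑Complex.ofRealHom = Matrix.diagonal dC from h2] at h0
      exact h0
    -- coordinates
    set a : Fin (r+1) → ℂ := Pc⁻¹ *ᵥ v' with hadef
    set b : Fin (r+1) → ℂ := Pc⁻¹ *ᵥ w with hbdef
    have ha : Pc *ᵥ a = v' := by
      rw [hadef, Matrix.mulVec_mulVec, Matrix.mul_nonsing_inv _ hPcunit, Matrix.one_mulVec]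
    have hb : Pc *ᵥ b = w := by
      rw [hbdef, Matrix.mulVec_mulVec, Matrix.mul_nonsing_inv _ hPcunit, Matrix.one_mulVec]
    set Q : (Fin (r+1) → ℂ) → (Fin (r+1) → ℂ) → ℂ :=
      fun x y => ∑ i, dC i * (x i * star (y i)) with hQdef
    have hQform : ∀ x y, H (Pc *ᵥ x) (Pc *ᵥ y) = Q x y := by
      intro x y
      simp only [hHdef, hQdef]
      rw [hstarP, Matrix.mulVec_mulVec, Matrix.dotProduct_mulVec,
        ← Matrix.mulVec_transpose, Matrix.mulVec_mulVec]
      have hmat : (Mc * Pc)ᵀ * Pc = Matrix.diagonal dC := by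
        rw [Matrix.transpose_mul, hMcsym, Matrix.mul_assoc]
        rw [← Matrix.mul_assoc, hsigC]
      rw [hmat]
      simp only [dotProduct, Matrix.mulVec_diagonal, Pi.star_apply]
      exact Finset.sum_congr rfl fun i _ => by ring
    have hQaa : Q a a = 0 := by
      have h := hQform a a; rw [ha] at h; rw [← h]; exact hvv
    have hQbb : Q b b = 0 := by
      have h := hQform b b; rw [hb] at h; rw [← h]; exact hww
    have hQab : Q a b = 0 := by
      have h := hQform a b; rw [ha, hb] at h; rw [← h]; exact hvw
    have hQba : Q b a = 0 := by
      have h := hQform b a; rw [ha, hb] at h; rw [← h]; exact hwv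
    -- Q x x = 0 with x 0 = 0 forces x = 0
    have hzero : ∀ x : Fin (r+1) → ℂ, x 0 = 0 → Q x x = 0 → x = 0 := by
      intro x hx0 hQx
      have hterm : ∀ i, dC i * (x i * star (x i)) = -((Complex.normSq (x i) : ℝ) : ℂ) := by
        intro i
        by_cases h : i = 0
        · subst h; simp [hdCdef, hx0]
        · simp only [hdCdef, if_neg h]
          rw [show x i * star (x i) = ((Complex.normSq (x i) : ℝ) : ℂ) by
            simp [Complex.star_def, Complex.mul_conj]]
          ring
      have hsum : Q x x = -(((∑ i, Complex.normSq (x i) : ℝ)) : ℂ) := by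
        simp only [hQdef]
        rw [Finset.sum_congr rfl fun i _ => hterm i]
        push_cast
        rw [← Finset.sum_neg_distrib]
      rw [hQx] at hsum
      have hs0 : (∑ i, Complex.normSq (x i)) = 0 := by
        have h2 : (((∑ i, Complex.normSq (x i) : ℝ)) : ℂ) = 0 := by
          rw [← neg_eq_zero, ← hsum]
        exact_mod_cast h2
      funext i
      have hi : Complex.normSq (x i) = 0 := by
        refine (Finset.sum_eq_zero_iff_of_nonneg fun j _ => Complex.normSq_nonneg (x j)).mp
          hs0 i (Finset.mem_univ i)
      show x i = 0
      exact Complex.normSq_eq_zero.mp hi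
    by_cases ha0 : a 0 = 0
    · have haz : a = 0 := hzero a ha0 hQaa
      apply hv'
      rw [← ha, haz, Matrix.mulVec_zero]
    · set c : Fin (r+1) → ℂ := fun i => b 0 * a i - a 0 * b i with hcdef
      have hc0 : c 0 = 0 := by simp only [hcdef]; ring
      have hexp : Q c c = b 0 * star (b 0) * Q a a - b 0 * star (a 0) * Q a b
          - a 0 * star (b 0) * Q b a + a 0 * star (a 0) * Q b b := by
        simp only [hQdef, hcdef, Finset.mul_sum, ← Finset.sum_sub_distrib,
          ← Finset.sum_add_distrib]
        refine Finset.sum_congr rfl fun i _ => ?_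
        simp only [star_sub, star_mul']
        ring
      have hQcc : Q c c = 0 := by
        rw [hexp, hQaa, hQab, hQba, hQbb]; ring
      have hcz : c = 0 := hzero c hc0 hQcc
      set t : ℂ := (a 0)⁻¹ * b 0 with htdef
      have hbt : b = t • a := by
        funext i
        have hci := congr_fun hcz i
        simp only [hcdef, Pi.zero_apply] at hci
        have h2 : b 0 * a i = a 0 * b i := sub_eq_zero.mp hci
        show b i = t * a i
        rw [htdef]
        field_simp
        linear_combination -h2
      have hwt : w = t • v' := by
        rw [← hb, ← ha, hbt, Matrix.mulVec_smul]
      have hμw : μ • w = (lam : ℂ) • w := by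
        have hAw : A *ᵥ w = (lam : ℂ) • w := by
          calc A *ᵥ w = A *ᵥ (t • v') := by rw [← hwt]
            _ = t • (A *ᵥ v') := Matrix.mulVec_smul A t v'
            _ = t • ((lam:ℂ) • v') := by rw [heigC]
            _ = (lam:ℂ) • (t • v') := smul_comm t (lam:ℂ) v'
            _ = (lam:ℂ) • w := by rw [← hwt]
        rw [← heigw, hAw]
      obtain ⟨i, hwi⟩ : ∃ i, w i ≠ 0 := by
        by_contra h
        push_neg at h
        exact hw (funext h)
      apply hne1
      have h2 := congr_fun hμw i
      simp only [Pi.smul_apply, smul_eq_mul] at h2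
      exact mul_right_cancel₀ hwi h2
  -- Part 4
  have hRroot : Sr.charpoly.IsRoot lam := my_isRoot_of_eig Sr lam v hv heig
  have part4 : IsIntegral ℤ lam := by
    refine ⟨S.charpoly, S.charpoly_monic, ?_⟩
    have : Polynomial.eval₂ (algebraMap ℤ ℝ) lam S.charpoly
        = (S.charpoly.map (Int.castRingHom ℝ)).eval lam := by
      rw [Polynomial.eval_map]
      rfl
    rw [this, ← Matrix.charpoly_map]
    exact hRroot
  -- Part 5
  have part5 : ∀ μ : ℂ, ((minpoly ℚ lam).map (algebraMap ℚ ℂ)).IsRoot μ →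
      μ ≠ (lam : ℂ) → μ ≠ ((lam⁻¹ : ℝ) : ℂ) → ‖μ‖ = 1 := by
    intro μ hμ h1 h2
    apply part3 μ _ h1 h2
    -- minpoly divides charpoly over ℚ
    have hq : Polynomial.aeval lam (S.charpoly.map (Int.castRingHom ℚ)) = 0 := by
      rw [Polynomial.aeval_def, Polynomial.eval₂_eq_eval_map, Polynomial.map_map]
      have hcomp : (algebraMap ℚ ℝ).comp (Int.castRingHom ℚ) = Int.castRingHom ℝ := by
        apply RingHom.ext_int
      rw [hcomp, ← Matrix.charpoly_map]
      exact hRroot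
    have hdvd : minpoly ℚ lam ∣ S.charpoly.map (Int.castRingHom ℚ) :=
      minpoly.dvd ℚ lam hq
    have hdvdC : (minpoly ℚ lam).map (algebraMap ℚ ℂ) ∣
        (S.charpoly.map (Int.castRingHom ℚ)).map (algebraMap ℚ ℂ) :=
      Polynomial.map_dvd _ hdvd
    have hchar : (S.charpoly.map (Int.castRingHom ℚ)).map (algebraMap ℚ ℂ) = A.charpoly := by
      have hmm : S.map ⇑((algebraMap ℚ ℂ).comp (Int.castRingHom ℚ)) = S.map (Int.cast : ℤ → ℂ) := by
        ext i j; simp [Matrix.map_apply]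
      rw [Polynomial.map_map, ← Matrix.charpoly_map, hmm, hA]
    rw [hchar] at hdvdC
    exact Polynomial.IsRoot.dvd hμ hdvdC
  exact ⟨part1, part2, part3, part4, part5⟩
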